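/- Let η_1, ..., η_r be pairwise distinct complex numbers on the unit circle and γ_1(x), ..., γ_r(x) nonzero polynomials in C[x]. Set g(n) = γ_1(n) η_1^n + ... + γ_r(n) η_r^n. If there exist G > 0 and n_0 such that |g(n)| ≤ G for all n ≥ n_0, then each γ_j(x) is a constant γ_j, and |γ_j| ≤ G for all j. -/

import Mathlib

open Finset Polynomial Filter Topology

/-- Cesàro average (division form) of a convergent complex sequence. -/
lemma cesaroC {u : ℕ → ℂ} {l : ℂ} (h : Tendsto u atTop (𝓝 l)) :
    Tendsto (fun N : ℕ => (∑ n ∈ range N, u n) / N) atTop (𝓝 l) := by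
  have := h.cesaro_smul
  refine this.congr (fun N => ?_)
  rw [Complex.real_smul]
  push_cast
  rw [inv_mul_eq_div]

lemma const_div_nat (c : ℂ) : Tendsto (fun N : ℕ => c / N) atTop (𝓝 0) := by
  apply squeeze_zero_norm (a := fun N : ℕ => ‖c‖ / N)
  · intro N
    simp [norm_div]
  · exact tendsto_const_div_atTop_nhds_zero_nat ‖c‖

/-- Cesàro average of ξ^n for ξ ≠ 1 with |ξ| = 1 tends to 0. -/
lemma cesaro_geom {ξ : ℂ} (h1 : ξ ≠ 1) (hm : ‖ξ‖ = 1) :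
    Tendsto (fun N : ℕ => (∑ n ∈ range N, ξ ^ n) / N) atTop (𝓝 0) := by
  apply squeeze_zero_norm (a := fun N : ℕ => (2 / ‖ξ - 1‖) / N)
  · intro N
    have h2 : ‖ξ ^ N - 1‖ ≤ 2 := by
      calc ‖ξ ^ N - 1‖ ≤ ‖ξ ^ N‖ + ‖(1:ℂ)‖ := norm_sub_le _ _
        _ ≤ 2 := by simp [norm_pow, hm]; norm_num
    rw [geom_sum_eq h1, norm_div, norm_div, Complex.norm_natCast]
    gcongr
  · exact tendsto_const_div_atTop_nhds_zero_nat _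

/-- Cesàro average of u n * ξ^n tends to 0 when u converges and ξ ≠ 1, |ξ| = 1. -/
lemma cesaro_mul_geom {u : ℕ → ℂ} {l : ℂ} (hu : Tendsto u atTop (𝓝 l))
    {ξ : ℂ} (h1 : ξ ≠ 1) (hm : ‖ξ‖ = 1) :
    Tendsto (fun N : ℕ => (∑ n ∈ range N, u n * ξ ^ n) / N) atTop (𝓝 0) := by
  have hnull : Tendsto (fun n => (u n - l) * ξ ^ n) atTop (𝓝 0) := by
    apply squeeze_zero_norm (a := fun n => ‖u n - l‖)
    · intro n; simp [norm_mul, norm_pow, hm]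
    · simpa using (tendsto_sub_nhds_zero_iff.2 hu).norm
  have h2 := cesaroC hnull
  have h3 := (cesaro_geom h1 hm).const_mul l
  have h4 := h2.add h3
  rw [mul_zero, add_zero] at h4
  refine h4.congr (fun N => ?_)
  rw [mul_div_assoc' l, ← add_div, Finset.mul_sum, ← Finset.sum_add_distrib]
  refine congrArg (fun z => z / (N:ℂ)) (Finset.sum_congr rfl fun n _ => by ring)

/-- polynomial eval limit -/
lemma poly_div_tendsto (p : Polynomial ℂ) (d : ℕ) (h : p.natDegree ≤ d) :
    Tendsto (fun n : ℕ => p.eval (n : ℂ) / ((n : ℂ) + 1) ^ d) atTop (𝓝 (p.coeff d)) := by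
  have hinv : Tendsto (fun n : ℕ => ((n : ℂ) + 1)⁻¹) atTop (𝓝 0) := by
    apply squeeze_zero_norm (a := fun n : ℕ => 1 / ((n : ℝ) + 1))
    · intro n
      rw [norm_inv, one_div]
      apply le_of_eq; congr 1
      rw [show ((n:ℂ)+1) = ((n+1 : ℕ) : ℂ) by push_cast; ring, Complex.norm_natCast]
      push_cast; ring
    · exact tendsto_one_div_add_atTop_nhds_zero_nat
  have hfrac : Tendsto (fun n : ℕ => (n : ℂ) / ((n : ℂ) + 1)) atTop (𝓝 1) := by
    have : ∀ n : ℕ, (n : ℂ) / ((n : ℂ) + 1) = 1 - ((n : ℂ) + 1)⁻¹ := by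
      intro n
      have hne : ((n : ℂ) + 1) ≠ 0 := by
        intro hc
        have := congrArg Complex.re hc
        simp at this
        nlinarith [Nat.cast_nonneg (α := ℝ) n, this]
      field_simp
      ring
    simp_rw [this]
    simpa using (tendsto_const_nhds (x := (1:ℂ))).sub hinv
  have hterm : ∀ k, k ≤ d → Tendsto (fun n : ℕ => (n : ℂ) ^ k / ((n : ℂ) + 1) ^ d)
      atTop (𝓝 (if k = d then 1 else 0)) := by
    intro k hk
    have heq : ∀ n : ℕ, (n : ℂ) ^ k / ((n : ℂ) + 1) ^ d
        = ((n : ℂ) / ((n : ℂ) + 1)) ^ k * (((n : ℂ) + 1)⁻¹) ^ (d - k) := by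
      intro n
      rw [div_pow, inv_pow, ← one_div, div_mul_div_comm, mul_one, ← pow_add,
        Nat.add_sub_cancel' hk]
    simp_rw [heq]
    have := (hfrac.pow k).mul (hinv.pow (d - k))
    rcases eq_or_ne k d with rfl | hne
    · simpa using this
    · have hdk : d - k ≠ 0 := by omega
      rw [zero_pow hdk, mul_zero] at this
      simpa [hne] using this
  have heval : ∀ n : ℕ, p.eval (n : ℂ) = ∑ k ∈ range (d + 1), p.coeff k * (n : ℂ) ^ k := by
    intro n
    exact p.eval_eq_sum_range' (Nat.lt_succ_of_le h) _
  have := tendsto_finset_sum (range (d+1))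
    (fun k hk => ((hterm k (Nat.lt_succ_iff.mp (mem_range.mp hk))).const_mul (p.coeff k)))
  have hsum : (∑ k ∈ range (d+1), p.coeff k * (if k = d then (1:ℂ) else 0)) = p.coeff d := by
    rw [Finset.sum_eq_single d]
    · simp
    · intro k _ hk; simp [hk]
    · intro hd; exact absurd (mem_range.mpr (Nat.lt_succ_self d)) hd
  rw [hsum] at this
  refine this.congr (fun n => ?_)
  rw [heval, Finset.sum_div]
  congr 1; ext k; ring

lemma normn1 (n : ℕ) : ‖((n : ℂ) + 1)‖ = (n : ℝ) + 1 := by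
  rw [show ((n:ℂ)+1) = ((n+1 : ℕ) : ℂ) by push_cast; ring, Complex.norm_natCast]
  push_cast; ring

theorem turan_bounded_exp_poly_sum
    (r : ℕ) (η : Fin r → ℂ) (γ : Fin r → Polynomial ℂ)
    (hinj : Function.Injective η)
    (hmod : ∀ i, ‖η i‖ = 1)
    (hγ : ∀ i, γ i ≠ 0)
    (G : ℝ) (hG : 0 < G) (n₀ : ℕ)
    (hbdd : ∀ n : ℕ, n₀ ≤ n →
      ‖∑ i, (γ i).eval (n : ℂ) * η i ^ n‖ ≤ G) :
    ∀ i, ∃ c : ℂ, γ i = Polynomial.C c ∧ ‖c‖ ≤ G := by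
  classical
  set g : ℕ → ℂ := fun n => ∑ i, (γ i).eval (n : ℂ) * η i ^ n with hg
  set d : ℕ := Finset.univ.sup (fun i => (γ i).natDegree) with hd
  have hηne : ∀ i, η i ≠ 0 := by
    intro i hc
    have := hmod i; rw [hc] at this; simp at this
  have hξ1 : ∀ i j : Fin r, i ≠ j → η i * (η j)⁻¹ ≠ 1 := by
    intro i j hij hc
    apply hij; apply hinj
    field_simp at hc
    exact (div_eq_one_iff_eq (hηne j)).mp hc
  have hξm : ∀ i j : Fin r, ‖η i * (η j)⁻¹‖ = 1 := by
    intro i j; rw [norm_mul, norm_inv, hmod, hmod]; norm_num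
  -- the key Cesàro limit
  have key : ∀ j : Fin r,
      Tendsto (fun N : ℕ => (∑ n ∈ range N, g n * ((η j)⁻¹) ^ n / ((n:ℂ)+1) ^ d) / N)
        atTop (𝓝 ((γ j).coeff d)) := by
    intro j
    have hrw : ∀ n : ℕ, g n * ((η j)⁻¹) ^ n / ((n:ℂ)+1) ^ d
        = ∑ i, ((γ i).eval (n:ℂ) / ((n:ℂ)+1)^d) * (η i * (η j)⁻¹) ^ n := by
      intro n
      simp only [hg]
      rw [Finset.sum_mul, Finset.sum_div]
      refine Finset.sum_congr rfl fun i _ => ?_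
      rw [mul_pow]; ring
    have hswap : ∀ N : ℕ, (∑ n ∈ range N, g n * ((η j)⁻¹)^n / ((n:ℂ)+1)^d) / N
        = ∑ i, (∑ n ∈ range N, ((γ i).eval (n:ℂ)/((n:ℂ)+1)^d) * (η i * (η j)⁻¹)^n) / N := by
      intro N
      rw [← Finset.sum_div]
      congr 1
      simp_rw [hrw]
      exact Finset.sum_comm
    have hlim : ∀ i : Fin r, Tendsto
        (fun N : ℕ => (∑ n ∈ range N, ((γ i).eval (n:ℂ)/((n:ℂ)+1)^d) * (η i * (η j)⁻¹)^n) / N)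
        atTop (𝓝 (if i = j then (γ j).coeff d else 0)) := by
      intro i
      rcases eq_or_ne i j with rfl | hij
      · simp only [if_pos rfl]
        have h1 : η i * (η i)⁻¹ = 1 := mul_inv_cancel₀ (hηne i)
        have := cesaroC (poly_div_tendsto (γ i) d (Finset.le_sup (f := fun i => (γ i).natDegree) (mem_univ i)))
        refine this.congr (fun N => ?_)
        simp [h1]
      · simp only [if_neg hij]
        exact cesaro_mul_geom (poly_div_tendsto (γ i) d (Finset.le_sup (f := fun i => (γ i).natDegree) (mem_univ i)))
          (hξ1 i j hij) (hξm i j)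
    have hsum := tendsto_finset_sum univ (fun i _ => hlim i)
    simp only [Finset.sum_ite_eq', mem_univ, if_true] at hsum
    exact hsum.congr (fun N => (hswap N).symm)
  -- all polynomials are constant
  have hd0 : d = 0 := by
    by_contra hd0
    have hne : (univ : Finset (Fin r)).Nonempty := by
      by_contra h
      rw [hd, Finset.not_nonempty_iff_eq_empty.mp h, Finset.sup_empty] at hd0
      exact hd0 rfl
    obtain ⟨j, -, hj⟩ := Finset.exists_mem_eq_sup univ hne (fun i => (γ i).natDegree)
    have hnull : Tendsto (fun n : ℕ => g n * ((η j)⁻¹)^n / ((n:ℂ)+1)^d) atTop (𝓝 0) := by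
      apply squeeze_zero_norm' (a := fun n : ℕ => G / ((n:ℝ)+1))
      · filter_upwards [eventually_ge_atTop n₀] with n hn
        have hnorm : ‖g n * ((η j)⁻¹)^n / ((n:ℂ)+1)^d‖ = ‖g n‖ / ((n:ℝ)+1)^d := by
          rw [norm_div, norm_mul, norm_pow, norm_inv, hmod, inv_one, one_pow, mul_one,
            norm_pow, normn1]
        rw [hnorm]
        have h1n : (1:ℝ) ≤ (n:ℝ) + 1 := by
          have := Nat.cast_nonneg (α := ℝ) n; linarith
        calc ‖g n‖ / ((n:ℝ)+1)^d ≤ G / ((n:ℝ)+1)^d := by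
              gcongr
              exact hbdd n hn
          _ ≤ G / ((n:ℝ)+1) := by
              gcongr
              exact le_self_pow₀ h1n hd0
      · have := tendsto_one_div_add_atTop_nhds_zero_nat.const_mul G
        rw [mul_zero] at this
        exact this.congr fun n => by ring
    have huniq : (γ j).coeff d = 0 := tendsto_nhds_unique (key j) (cesaroC hnull)
    rw [hd, hj] at huniq
    rw [Polynomial.coeff_natDegree] at huniq
    exact hγ j (Polynomial.leadingCoeff_eq_zero.mp huniq)
  -- conclusion
  intro i
  have hsup0 : univ.sup (fun i => (γ i).natDegree) = 0 := by rw [← hd]; exact hd0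
  have hdeg : (γ i).natDegree = 0 :=
    Nat.le_zero.mp (hsup0 ▸ Finset.le_sup (f := fun i => (γ i).natDegree) (mem_univ i))
  refine ⟨(γ i).coeff 0, Polynomial.eq_C_of_natDegree_eq_zero hdeg, ?_⟩
  have hkey := key i
  rw [hd0] at hkey
  simp only [pow_zero, div_one] at hkey
  set head : ℂ := ∑ n ∈ range n₀, g n * ((η i)⁻¹)^n with hhead
  have hT : Tendsto (fun N : ℕ => (∑ n ∈ Ico n₀ N, g n * ((η i)⁻¹)^n) / N)
      atTop (𝓝 ((γ i).coeff 0)) := by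
    have h2 := hkey.sub (const_div_nat head)
    rw [sub_zero] at h2
    refine h2.congr' ?_
    filter_upwards [eventually_ge_atTop n₀] with N hN
    have hsplit : ∑ n ∈ range N, g n * ((η i)⁻¹)^n
        = head + ∑ n ∈ Ico n₀ N, g n * ((η i)⁻¹)^n := by
      rw [hhead, Finset.range_eq_Ico]
      rw [Finset.range_eq_Ico]
      exact (Finset.sum_Ico_consecutive (fun n => g n * ((η i)⁻¹)^n) (Nat.zero_le n₀) hN).symm
    rw [hsplit, add_div]
    ring
  have hbound : ∀ᶠ N in atTop, ‖(∑ n ∈ Ico n₀ N, g n * ((η i)⁻¹)^n) / (N:ℂ)‖ ≤ G := by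
    filter_upwards [eventually_ge_atTop (max n₀ 1)] with N hN
    have hN1 : 1 ≤ N := le_trans (le_max_right _ _) hN
    have hNpos : (0:ℝ) < N := by exact_mod_cast Nat.lt_of_lt_of_le Nat.zero_lt_one hN1
    have hsum : ‖∑ n ∈ Ico n₀ N, g n * ((η i)⁻¹)^n‖ ≤ ((N - n₀ : ℕ) : ℝ) * G := by
      calc ‖∑ n ∈ Ico n₀ N, g n * ((η i)⁻¹)^n‖
          ≤ ∑ n ∈ Ico n₀ N, ‖g n * ((η i)⁻¹)^n‖ := norm_sum_le _ _
        _ ≤ ∑ _n ∈ Ico n₀ N, G := by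
            refine Finset.sum_le_sum fun n hn => ?_
            rw [norm_mul, norm_pow, norm_inv, hmod, inv_one, one_pow, mul_one]
            exact hbdd n (mem_Ico.mp hn).1
        _ = ((N - n₀ : ℕ) : ℝ) * G := by
            rw [Finset.sum_const, Nat.card_Ico, nsmul_eq_mul]
    rw [norm_div, Complex.norm_natCast, div_le_iff₀ hNpos]
    calc ‖∑ n ∈ Ico n₀ N, g n * ((η i)⁻¹)^n‖ ≤ ((N - n₀ : ℕ) : ℝ) * G := hsum
      _ ≤ (N : ℝ) * G := by
          gcongr
          exact_mod_cast Nat.sub_le N n₀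
      _ = G * N := mul_comm _ _
  exact le_of_tendsto hT.norm hbound
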